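/- Let g₁ be a factor over a finite variable set W₁ and g₂ a factor over a finite variable set W₂, and let Z be any set of variables. Then summing out all variables not in Z from the product g₁ · g₂ can be decomposed by first summing out of each factor independently all of its variables not shared with the other factor or with Z: ∑_{(W₁∪W₂)\Z} (g₁ · g₂) = ∑_{((W₁∩(W₂∪Z)) ∪ (W₂∩(W₁∪Z)))\Z} ((∑_{W₁\(W₂∪Z)} g₁) · (∑_{W₂\(W₁∪Z)} g₂)). -/

import Mathlib

/-- An instantiation of the variables in `S`, where variable `i` has value set `V i`. -/
abbrev Inst {ι : Type*} (V : ι → Type*) (S : Finset ι) : Type _ :=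
  ∀ i : S, V i

/-- Restrict an instantiation of `T` to a subset `S ⊆ T`. -/
def Inst.restrict {ι : Type*} {V : ι → Type*} {S T : Finset ι} (h : S ⊆ T)
    (z : Inst V T) : Inst V S :=
  fun i => z ⟨i, h i.2⟩

/-- Transport an instantiation along an equality of variable sets. -/
def Inst.cast {ι : Type*} {V : ι → Type*} {S T : Finset ι} (h : S = T)
    (z : Inst V S) : Inst V T :=
  fun i => z ⟨i, h.symm ▸ i.2⟩

/-- Extend an instantiation `u` of `U` with a value `x` for the variable `X`,
yielding an instantiation of `insert X U`. -/
def Inst.consX {ι : Type*} [DecidableEq ι] {V : ι → Type*} {U : Finset ι} (X : ι)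
    (x : V X) (u : Inst V U) : Inst V (insert X U) :=
  fun i => if h : (i : ι) = X then _root_.cast (congrArg V h).symm x
           else u ⟨i, (Finset.mem_insert.mp i.2).resolve_left h⟩

/-- Extend an instantiation `w` of `W \ {X}` with a value `x` for `X ∈ W`,
yielding an instantiation of `W`. -/
def Inst.extendAt {ι : Type*} [DecidableEq ι] {V : ι → Type*} {W : Finset ι} (X : ι)
    (_hX : X ∈ W) (x : V X) (w : Inst V (W \ {X})) : Inst V W :=
  fun i => if h : (i : ι) = X then _root_.cast (congrArg V h).symm x
           else w ⟨i, Finset.mem_sdiff.mpr ⟨i.2, Finset.notMem_singleton.mpr h⟩⟩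

/-- The product of a factor over `S` and a factor over `T` is a factor over `S ∪ T`. -/
def Factor.mul {ι : Type*} [DecidableEq ι] {V : ι → Type*} {S T : Finset ι}
    (f : Inst V S → ℝ) (g : Inst V T → ℝ) : Inst V (S ∪ T) → ℝ :=
  fun z => f (fun i => z ⟨i, Finset.mem_union_left _ i.2⟩) *
           g (fun i => z ⟨i, Finset.mem_union_right _ i.2⟩)

/-- Summing out the variables `Y ⊆ S` from a factor over `S` yields a factor over `S \ Y`. -/
noncomputable def Factor.sumOut {ι : Type*} [DecidableEq ι] {V : ι → Type*}
    [∀ i, Fintype (V i)] {S : Finset ι} (Y : Finset ι) (_hY : Y ⊆ S)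
    (f : Inst V S → ℝ) : Inst V (S \ Y) → ℝ :=
  fun z => ∑ y : Inst V Y, f fun i =>
    if h : (i : ι) ∈ Y then y ⟨i, h⟩ else z ⟨i, Finset.mem_sdiff.mpr ⟨i.2, h⟩⟩

def instUnionEquiv {ι : Type*} [DecidableEq ι] {V : ι → Type*} {P Q : Finset ι}
    (hd : Disjoint P Q) : (Inst V P × Inst V Q) ≃ Inst V (P ∪ Q) where
  toFun pq i := if hp : (i : ι) ∈ P then pq.1 ⟨i, hp⟩
    else pq.2 ⟨i, (Finset.mem_union.mp i.2).resolve_left hp⟩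
  invFun y := (fun i => y ⟨i, Finset.mem_union_left _ i.2⟩,
               fun i => y ⟨i, Finset.mem_union_right _ i.2⟩)
  left_inv pq := by
    ext i
    · exact dif_pos i.2
    · exact dif_neg fun h => (Finset.disjoint_left.mp hd h) i.2
  right_inv y := by
    funext i
    dsimp only
    split <;> rfl

lemma sum_inst_union {ι : Type*} [DecidableEq ι] {V : ι → Type*} [∀ i, Fintype (V i)]
    {P Q : Finset ι} (hd : Disjoint P Q) (f : Inst V (P ∪ Q) → ℝ) :
    ∑ y : Inst V (P ∪ Q), f y
      = ∑ p : Inst V P, ∑ q : Inst V Q, f (instUnionEquiv hd (p, q)) := by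
  rw [← Equiv.sum_comp (instUnionEquiv hd) f, Fintype.sum_prod_type]

lemma sum_inst_triple {ι : Type*} [DecidableEq ι] {V : ι → Type*} [∀ i, Fintype (V i)]
    {P Q R : Finset ι} (hd1 : Disjoint P (Q ∪ R)) (hd2 : Disjoint Q R)
    {T : Finset ι} (hT : T = P ∪ (Q ∪ R)) (f : Inst V T → ℝ) :
    ∑ y : Inst V T, f y
      = ∑ p : Inst V P, ∑ q : Inst V Q, ∑ r : Inst V R,
          f (Inst.cast hT.symm (instUnionEquiv hd1 (p, instUnionEquiv hd2 (q, r)))) := by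
  subst hT
  rw [sum_inst_union hd1]
  refine Finset.sum_congr rfl fun p _ => ?_
  rw [sum_inst_union hd2]
  rfl


set_option maxHeartbeats 2000000 in
/-- For factors `g₁` over `W₁` and `g₂` over `W₂` and any set of
variables `Z`, summing out all variables not in `Z` from `g₁ · g₂` decomposes as
`∑_{(W₁∪W₂)\Z} (g₁·g₂) =
   ∑_{((W₁∩(W₂∪Z)) ∪ (W₂∩(W₁∪Z)))\Z} ((∑_{W₁\(W₂∪Z)} g₁) · (∑_{W₂\(W₁∪Z)} g₂))`. -/
theorem sumOut_mul_decompose {ι : Type*} [DecidableEq ι] (V : ι → Type*)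
    [∀ i, Fintype (V i)] [∀ i, Nonempty (V i)]
    (W₁ W₂ Z : Finset ι) (g₁ : Inst V W₁ → ℝ) (g₂ : Inst V W₂ → ℝ) :
    ∀ z : Inst V ((W₁ ∪ W₂) \ ((W₁ ∪ W₂) \ Z)),
      Factor.sumOut ((W₁ ∪ W₂) \ Z) Finset.sdiff_subset (Factor.mul g₁ g₂) z
        = Factor.sumOut (((W₁ ∩ (W₂ ∪ Z)) ∪ (W₂ ∩ (W₁ ∪ Z))) \ Z)
            (by
              intro a ha
              simp only [Finset.mem_sdiff, Finset.mem_union, Finset.mem_inter] at ha ⊢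
              tauto)
            (Factor.mul
              (Factor.sumOut (W₁ \ (W₂ ∪ Z)) Finset.sdiff_subset g₁)
              (Factor.sumOut (W₂ \ (W₁ ∪ Z)) Finset.sdiff_subset g₂))
            (Inst.cast
              (by
                ext a
                simp only [Finset.mem_sdiff, Finset.mem_union, Finset.mem_inter]
                tauto) z) := by
  intro z
  classical
  have hd2 : Disjoint (W₁ \ (W₂ ∪ Z)) (W₂ \ (W₁ ∪ Z)) := by
    rw [Finset.disjoint_left]
    intro a ha hb
    simp only [Finset.mem_sdiff, Finset.mem_union] at ha hb
    tauto
  have hd1 : Disjoint (((W₁ ∩ (W₂ ∪ Z)) ∪ (W₂ ∩ (W₁ ∪ Z))) \ Z)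
      ((W₁ \ (W₂ ∪ Z)) ∪ (W₂ \ (W₁ ∪ Z))) := by
    rw [Finset.disjoint_left]
    intro a ha hb
    simp only [Finset.mem_sdiff, Finset.mem_union, Finset.mem_inter] at ha hb
    tauto
  have hY : (W₁ ∪ W₂) \ Z
      = (((W₁ ∩ (W₂ ∪ Z)) ∪ (W₂ ∩ (W₁ ∪ Z))) \ Z)
        ∪ ((W₁ \ (W₂ ∪ Z)) ∪ (W₂ \ (W₁ ∪ Z))) := by
    ext a
    simp only [Finset.mem_sdiff, Finset.mem_union, Finset.mem_inter]
    tauto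
  show (∑ y : Inst V ((W₁ ∪ W₂) \ Z), _) = _
  rw [sum_inst_triple hd1 hd2 hY]
  simp only [Factor.sumOut, Factor.mul, Finset.sum_mul_sum]
  refine Finset.sum_congr rfl fun c _ => ?_
  refine Finset.sum_congr rfl fun a _ => ?_
  refine Finset.sum_congr rfl fun b _ => ?_
  refine congrArg₂ (· * ·)
    (congrArg g₁ (funext fun i => ?_)) (congrArg g₂ (funext fun i => ?_)) <;>
  · obtain ⟨i, hi⟩ := i
    simp only [Inst.cast, instUnionEquiv, Equiv.coe_fn_mk]
    split_ifs
    all_goals try rfl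
    all_goals exfalso
    all_goals clear! hd1 hd2 hY c a b z g₁ g₂
    all_goals aesop
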